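/- Consider the Normal location family F_θ(x) := Φ((x − θ)/s) for a known scale s > 0 and location parameter θ ∈ ℝ, where Φ is the standard Normal distribution function with density φ(t) = e^{−t²/2}/√(2π). Fix λ ∈ (0,1) and θ_0 ∈ ℝ, and let h_{λ,θ_0}(θ) := F_{θ_0}(F_θ^{−1}(λ)). Then the second derivative at θ = θ_0 of the rate function I_{λ,θ_0}(θ) := H(λ|h_{λ,θ_0}(θ)) equals I_{λ,θ_0}″(θ_0) = (φ(Φ^{−1}(λ)))²/(s²λ(1−λ)); in particular I_{1/2,θ_0}″(θ_0) = 2/(πs²). Moreover the Cramér rate function of the sample mean, J_{θ_0}(θ) := sup_{γ∈ℝ}{γθ − (γθ_0 + γ²s²/2)} = (θ − θ_0)²/(2s²), satisfies J_{θ_0}″(θ_0) = 1/s² > 2/(πs²) = I_{1/2,θ_0}″(θ_0). -/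

import Mathlib

open Set MeasureTheory

/-- Relative entropy `H(p|q)` of the Bernoulli(`p`) law w.r.t. the Bernoulli(`q`) law. -/
noncomputable def relEntBer (p q : ℝ) : ℝ :=
  p * Real.log (p / q) + (1 - p) * Real.log ((1 - p) / (1 - q))

noncomputable def stdphi (t : ℝ) : ℝ := Real.exp (-t ^ 2 / 2) / Real.sqrt (2 * Real.pi)
noncomputable def stdPhi (x : ℝ) : ℝ := ∫ t in Set.Iic x, stdphi t

lemma stdphi_eq (t : ℝ) : stdphi t = Real.exp (-(1/2) * t ^ 2) * (Real.sqrt (2 * Real.pi))⁻¹ := by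
  rw [stdphi, div_eq_mul_inv]; ring_nf

lemma stdphi_pos (t : ℝ) : 0 < stdphi t := by
  apply div_pos (Real.exp_pos _)
  exact Real.sqrt_pos.2 (by positivity)

lemma stdphi_cont : Continuous stdphi := by
  unfold stdphi; fun_prop

lemma stdphi_integrable : Integrable stdphi := by
  have := (integrable_exp_neg_mul_sq (b := 1/2) (by norm_num)).mul_const
    (Real.sqrt (2 * Real.pi))⁻¹
  apply this.congr
  filter_upwards with t
  rw [stdphi_eq]

lemma stdphi_total : ∫ t, stdphi t = 1 := by
  have h1 : ∫ t : ℝ, Real.exp (-(1/2) * t ^ 2) = Real.sqrt (Real.pi / (1/2)) :=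
    integral_gaussian (1/2)
  have : ∫ t, stdphi t = (∫ t : ℝ, Real.exp (-(1/2) * t ^ 2)) * (Real.sqrt (2 * Real.pi))⁻¹ := by
    rw [← integral_mul_const]
    congr 1; ext t; rw [stdphi_eq]
  rw [this, h1]
  rw [show Real.pi / (1/2) = 2 * Real.pi by ring]
  rw [mul_inv_cancel₀]
  positivity

lemma stdphi_even (t : ℝ) : stdphi (-t) = stdphi t := by
  simp [stdphi, neg_pow]

lemma hasDerivAt_stdPhi (x : ℝ) : HasDerivAt stdPhi (stdphi x) x := by
  have key : ∀ y, stdPhi y = stdPhi 0 + ∫ t in (0:ℝ)..y, stdphi t := by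
    intro y
    rw [stdPhi, stdPhi, eq_comm, add_comm,
      ← intervalIntegral.integral_Iic_sub_Iic stdphi_integrable.integrableOn
        stdphi_integrable.integrableOn]
    ring
  have hd : HasDerivAt (fun y => stdPhi 0 + ∫ t in (0:ℝ)..y, stdphi t) (stdphi x) x := by
    apply HasDerivAt.const_add
    exact intervalIntegral.integral_hasDerivAt_right
      stdphi_integrable.intervalIntegrable
      (stdphi_cont.stronglyMeasurableAtFilter _ _) stdphi_cont.continuousAt
  exact hd.congr_of_eventuallyEq (Filter.Eventually.of_forall key)

lemma stdPhi_strictMono : StrictMono stdPhi := by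
  intro a b hab
  have : stdPhi b - stdPhi a = ∫ t in a..b, stdphi t := by
    rw [stdPhi, stdPhi,
      intervalIntegral.integral_Iic_sub_Iic stdphi_integrable.integrableOn
        stdphi_integrable.integrableOn]
  have hpos : 0 < ∫ t in a..b, stdphi t :=
    intervalIntegral.intervalIntegral_pos_of_pos
      stdphi_integrable.intervalIntegrable stdphi_pos hab
  linarith

lemma stdPhi_mem_Ioo (x : ℝ) : stdPhi x ∈ Set.Ioo (0:ℝ) 1 := by
  constructor
  · have h1 : (0:ℝ) ≤ stdPhi (x - 1) :=
      setIntegral_nonneg measurableSet_Iic (fun t _ => (stdphi_pos t).le)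
    have := stdPhi_strictMono (show x - 1 < x by linarith)
    linarith
  · have h2 : stdPhi (x + 1) ≤ 1 := by
      rw [← stdphi_total, stdPhi]
      exact setIntegral_le_integral stdphi_integrable
        (Filter.Eventually.of_forall fun t => (stdphi_pos t).le)
    have := stdPhi_strictMono (show x < x + 1 by linarith)
    linarith

lemma stdPhi_zero : stdPhi 0 = 1 / 2 := by
  have hsplit : (∫ t in Set.Iic (0:ℝ), stdphi t) + ∫ t in Set.Ioi (0:ℝ), stdphi t
      = ∫ t, stdphi t :=
    intervalIntegral.integral_Iic_add_Ioi stdphi_integrable.integrableOn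
      stdphi_integrable.integrableOn
  have hsym : ∫ t in Set.Ioi (0:ℝ), stdphi t = ∫ t in Set.Iic (0:ℝ), stdphi t := by
    have h := integral_comp_neg_Ioi (0:ℝ) stdphi
    simp only [stdphi_even, neg_zero] at h
    exact h
  rw [stdphi_total, hsym] at hsplit
  rw [stdPhi]; linarith

lemma hasDerivAt_stdphi (t : ℝ) : HasDerivAt stdphi (-t * stdphi t) t := by
  have h1 : HasDerivAt (fun u : ℝ => -u ^ 2 / 2) (-t) t := by
    have := ((hasDerivAt_pow 2 t).neg).div_const 2
    simpa using this.congr_deriv (by push_cast; ring)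
  have h2 := (h1.exp).div_const (Real.sqrt (2 * Real.pi))
  refine h2.congr_deriv ?_
  simp only [stdphi]; ring

lemma hasDerivAt_relEntBer (l : ℝ) (hl : l ∈ Set.Ioo (0:ℝ) 1) {q : ℝ}
    (hq : q ∈ Set.Ioo (0:ℝ) 1) :
    HasDerivAt (relEntBer l) (-l / q + (1 - l) / (1 - q)) q := by
  obtain ⟨hl0, hl1⟩ := hl
  obtain ⟨hq0, hq1⟩ := hq
  have hq0' : q ≠ 0 := ne_of_gt hq0
  have hq1' : (1:ℝ) - q ≠ 0 := by linarith
  have h1 : HasDerivAt (fun q : ℝ => l / q) ((0 * q - l * 1) / q ^ 2) q :=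
    (hasDerivAt_const q l).div (hasDerivAt_id q) hq0'
  have h2 : HasDerivAt (fun q : ℝ => (1 - l) / (1 - q))
      ((0 * (1 - q) - (1 - l) * (0 - 1)) / (1 - q) ^ 2) q :=
    (hasDerivAt_const q (1 - l)).div ((hasDerivAt_const q 1).sub (hasDerivAt_id q)) hq1'
  have hne1 : l / q ≠ 0 := by positivity
  have hne2 : (1 - l) / (1 - q) ≠ 0 := by
    apply ne_of_gt; apply div_pos <;> linarith
  have h3 := (h1.log hne1).const_mul l
  have h4 := (h2.log hne2).const_mul (1 - l)
  have h5 := h3.add h4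
  have hl0' : l ≠ 0 := ne_of_gt hl0
  have hl1' : (1:ℝ) - l ≠ 0 := by linarith
  refine h5.congr_deriv ?_
  field_simp
  ring

lemma curv_key (s θ₀ : ℝ) (hs : 0 < s) (l c : ℝ) (hl : l ∈ Set.Ioo (0:ℝ) 1)
    (hc : stdPhi c = l) :
    deriv (deriv fun θ => relEntBer l (stdPhi ((θ + s * c - θ₀) / s))) θ₀
      = (stdphi c) ^ 2 / (s ^ 2 * l * (1 - l)) := by
  obtain ⟨hl0, hl1⟩ := hl
  have hs' : s ≠ 0 := ne_of_gt hs
  set u : ℝ → ℝ := fun θ => (θ + s * c - θ₀) / s with hu_def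
  set g : ℝ → ℝ := fun θ => stdPhi (u θ) with hg_def
  have hu : ∀ θ, HasDerivAt u (1 / s) θ := by
    intro θ
    have : HasDerivAt (fun θ : ℝ => (θ + (s * c - θ₀)) / s) (1 / s) θ := by
      simpa using ((hasDerivAt_id θ).add_const (s * c - θ₀)).div_const s
    exact this.congr_deriv rfl |>.congr_of_eventuallyEq
      (Filter.Eventually.of_forall fun x => by ring)
  have hg : ∀ θ, HasDerivAt g (stdphi (u θ) / s) θ := by
    intro θ
    have := (hasDerivAt_stdPhi (u θ)).comp θ (hu θ)
    exact this.congr_deriv (mul_one_div _ _)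
  have hgmem : ∀ θ, g θ ∈ Set.Ioo (0:ℝ) 1 := fun θ => stdPhi_mem_Ioo (u θ)
  have hrate : ∀ θ, HasDerivAt (fun θ => relEntBer l (g θ))
      ((-l / g θ + (1 - l) / (1 - g θ)) * (stdphi (u θ) / s)) θ := by
    intro θ
    exact (hasDerivAt_relEntBer l ⟨hl0, hl1⟩ (hgmem θ)).comp θ (hg θ)
  have hD1 : (deriv fun θ => relEntBer l (g θ))
      = fun θ => (-l / g θ + (1 - l) / (1 - g θ)) * (stdphi (u θ) / s) := by
    funext θ; exact (hrate θ).deriv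
  rw [hD1]
  have huθ₀ : u θ₀ = c := by simp only [hu_def]; field_simp; ring
  have hgθ₀ : g θ₀ = l := by rw [hg_def]; simp only [huθ₀, hc]
  have hl1' : (1:ℝ) - l ≠ 0 := by linarith
  have hA1 : HasDerivAt (fun θ => -l / g θ)
      ((0 * g θ₀ - -l * (stdphi (u θ₀) / s)) / g θ₀ ^ 2) θ₀ :=
    (hasDerivAt_const θ₀ (-l)).div (hg θ₀) (by rw [hgθ₀]; exact ne_of_gt hl0)
  have hA2 : HasDerivAt (fun θ => (1 - l) / (1 - g θ))
      ((0 * (1 - g θ₀) - (1 - l) * (0 - stdphi (u θ₀) / s)) / (1 - g θ₀) ^ 2) θ₀ :=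
    (hasDerivAt_const θ₀ (1 - l)).div ((hasDerivAt_const θ₀ 1).sub (hg θ₀))
      (by rw [hgθ₀]; exact hl1')
  have hA := hA1.add hA2
  have hB : HasDerivAt (fun θ => stdphi (u θ) / s)
      ((-u θ₀ * stdphi (u θ₀)) * (1 / s) / s) θ₀ :=
    (((hasDerivAt_stdphi (u θ₀)).comp θ₀ (hu θ₀)).div_const s)
  have hAB := hA.mul hB
  rw [show (fun θ => (-l / g θ + (1 - l) / (1 - g θ)) * (stdphi (u θ) / s)) = ((fun θ => -l / g θ) + fun θ => (1 - l) / (1 - g θ)) * (fun θ => stdphi (u θ) / s) from rfl, hAB.deriv]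
  simp only [Pi.add_apply]
  rw [huθ₀, hgθ₀]
  field_simp
  ring

/-- Normal location family `F_θ(x) = Φ((x−θ)/s)`: curvature of the method-of-quantiles
rate function at `θ₀` (equal to `2/(πs²)` at `λ = 1/2`), the Cramér rate function of the
sample mean `J_{θ₀}(θ) = (θ−θ₀)²/(2s²)`, and the comparison `J'' = 1/s² > 2/(πs²)`. -/
theorem stmt_17 (s θ₀ : ℝ) (hs : 0 < s)
    (lam : ℝ) (hlam : lam ∈ Set.Ioo (0 : ℝ) 1)
    (φ : ℝ → ℝ) (hφ : ∀ t, φ t = Real.exp (-t ^ 2 / 2) / Real.sqrt (2 * Real.pi))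
    (Φ : ℝ → ℝ) (hΦ : ∀ x, Φ x = ∫ t in Set.Iic x, φ t)
    (Φinv : ℝ → ℝ) (hΦinv : ∀ l ∈ Set.Ioo (0 : ℝ) 1, Φ (Φinv l) = l)
    (F : ℝ → ℝ → ℝ) (hF : ∀ θ x, F θ x = Φ ((x - θ) / s))
    -- `h l θ = F_{θ₀}(F_θ^{-1}(l)) = Φ((θ + sΦ^{-1}(l) − θ₀)/s)`
    (h : ℝ → ℝ → ℝ) (hh : ∀ l θ, h l θ = Φ ((θ + s * Φinv l - θ₀) / s))
    -- `curv l = I_{l,θ₀}''(θ₀)` where `I_{l,θ₀}(θ) = H(l | h_{l,θ₀}(θ))`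
    (curv : ℝ → ℝ)
    (hcurv : ∀ l, curv l = deriv (deriv fun θ => relEntBer l (h l θ)) θ₀)
    -- Cramér rate function of the sample mean of Normal(`θ₀`, `s²`) random variables
    (J : ℝ → ℝ)
    (hJ : ∀ θ, J θ = sSup (Set.range fun γ : ℝ => γ * θ - (γ * θ₀ + γ ^ 2 * s ^ 2 / 2))) :
    curv lam = (φ (Φinv lam)) ^ 2 / (s ^ 2 * lam * (1 - lam)) ∧
    curv (1 / 2) = 2 / (Real.pi * s ^ 2) ∧
    (∀ θ, J θ = (θ - θ₀) ^ 2 / (2 * s ^ 2)) ∧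
    deriv (deriv J) θ₀ = 1 / s ^ 2 ∧
    2 / (Real.pi * s ^ 2) < 1 / s ^ 2 := by
  have hφ' : φ = stdphi := funext fun t => hφ t
  have hΦ' : Φ = stdPhi := by
    funext x; rw [hΦ x, hφ']; rfl
  have hs2 : (0:ℝ) < s ^ 2 := by positivity
  have hπ : (0:ℝ) < Real.pi := Real.pi_pos
  -- general curvature formula
  have hcurv_gen : ∀ l ∈ Set.Ioo (0:ℝ) 1,
      curv l = (stdphi (Φinv l)) ^ 2 / (s ^ 2 * l * (1 - l)) := by
    intro l hl
    rw [hcurv l]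
    have hfun : (fun θ => relEntBer l (h l θ))
        = fun θ => relEntBer l (stdPhi ((θ + s * Φinv l - θ₀) / s)) := by
      funext θ; rw [hh, hΦ']
    rw [hfun]
    have hc : stdPhi (Φinv l) = l := by rw [← hΦ']; exact hΦinv l hl
    exact curv_key s θ₀ hs l (Φinv l) hl hc
  have hJform : ∀ θ, J θ = (θ - θ₀) ^ 2 / (2 * s ^ 2) := by
    intro θ
    rw [hJ θ]
    apply IsGreatest.csSup_eq
    constructor
    · refine ⟨(θ - θ₀) / s ^ 2, ?_⟩
      show (θ - θ₀) / s ^ 2 * θ - ((θ - θ₀) / s ^ 2 * θ₀ + ((θ - θ₀) / s ^ 2) ^ 2 * s ^ 2 / 2) = _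
      field_simp
      ring
    · rintro y ⟨γ, rfl⟩
      show γ * θ - (γ * θ₀ + γ ^ 2 * s ^ 2 / 2) ≤ (θ - θ₀) ^ 2 / (2 * s ^ 2)
      rw [← sub_nonneg]
      have key : (θ - θ₀) ^ 2 / (2 * s ^ 2) - (γ * θ - (γ * θ₀ + γ ^ 2 * s ^ 2 / 2))
          = (γ * s ^ 2 - (θ - θ₀)) ^ 2 / (2 * s ^ 2) := by
        field_simp
        ring
      rw [key]
      positivity
  refine ⟨?_, ?_, ?_, ?_, ?_⟩
  · rw [hcurv_gen lam hlam, hφ']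
  · have hhalf : (1:ℝ)/2 ∈ Set.Ioo (0:ℝ) 1 := by norm_num
    have hc0 : Φinv (1/2) = 0 := by
      apply stdPhi_strictMono.injective
      rw [← hΦ', hΦinv _ hhalf, hΦ', stdPhi_zero]
    rw [hcurv_gen (1/2) hhalf, hc0]
    have hphi0 : stdphi 0 ^ 2 = 1 / (2 * Real.pi) := by
      have h2π : (0:ℝ) ≤ 2 * Real.pi := by positivity
      rw [stdphi, div_pow, Real.sq_sqrt h2π]
      norm_num
    rw [hphi0]
    field_simp
    ring
  · exact hJform
  · have hJfun : J = fun θ => (θ - θ₀) ^ 2 / (2 * s ^ 2) := funext hJform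
    rw [hJfun]
    have hd1 : ∀ θ : ℝ, HasDerivAt (fun θ : ℝ => (θ - θ₀) ^ 2 / (2 * s ^ 2))
        ((θ - θ₀) / s ^ 2) θ := by
      intro θ
      have := (((hasDerivAt_id θ).sub_const θ₀).pow 2).div_const (2 * s ^ 2)
      refine this.congr_deriv ?_
      push_cast [id_eq]
      field_simp
    have hD : (deriv fun θ : ℝ => (θ - θ₀) ^ 2 / (2 * s ^ 2))
        = fun θ => (θ - θ₀) / s ^ 2 := funext fun θ => (hd1 θ).deriv
    rw [hD]
    have hd2 : HasDerivAt (fun θ : ℝ => (θ - θ₀) / s ^ 2) (1 / s ^ 2) θ₀ := by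
      simpa using ((hasDerivAt_id θ₀).sub_const θ₀).div_const (s ^ 2)
    exact hd2.deriv
  · rw [div_lt_div_iff₀ (by positivity) hs2]
    nlinarith [Real.pi_gt_three]
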